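/- Let a₁ = cos θ₁, b₁ = ±sin θ₁, a₂ = cos θ₂, and suppose b₂ ∈ ℝ satisfies b₂² ≥ sin²θ₂ and a₁a₂ − b₁b₂ = cos θ₃, with θ₁, θ₂, θ₃ ∈ (0, π). Then either 0 < θ₃/π ≤ |θ₁/π − θ₂/π| or 1 − |θ₁/π + θ₂/π − 1| ≤ θ₃/π < 1. -/

import Mathlib

open Real in
theorem stmt_17 (θ₁ θ₂ θ₃ a₁ b₁ a₂ b₂ : ℝ)
    (h₁ : θ₁ ∈ Set.Ioo 0 π) (h₂ : θ₂ ∈ Set.Ioo 0 π) (h₃ : θ₃ ∈ Set.Ioo 0 π)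
    (ha₁ : a₁ = Real.cos θ₁) (hb₁ : b₁ = Real.sin θ₁ ∨ b₁ = -Real.sin θ₁)
    (ha₂ : a₂ = Real.cos θ₂) (hb₂ : b₂ ^ 2 ≥ Real.sin θ₂ ^ 2)
    (heq : a₁ * a₂ - b₁ * b₂ = Real.cos θ₃) :
    (0 < θ₃ / π ∧ θ₃ / π ≤ |θ₁ / π - θ₂ / π|) ∨
    (1 - |θ₁ / π + θ₂ / π - 1| ≤ θ₃ / π ∧ θ₃ / π < 1) := by
  obtain ⟨h1a, h1b⟩ := h₁
  obtain ⟨h2a, h2b⟩ := h₂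
  obtain ⟨h3a, h3b⟩ := h₃
  have hπ : (0:ℝ) < π := Real.pi_pos
  have hs1 : 0 < Real.sin θ₁ := Real.sin_pos_of_pos_of_lt_pi h1a h1b
  have hs2 : 0 ≤ Real.sin θ₂ := (Real.sin_pos_of_pos_of_lt_pi h2a h2b).le
  have habs : Real.sin θ₂ ≤ |b₂| := by
    have := Real.sqrt_le_sqrt hb₂
    rwa [Real.sqrt_sq hs2, Real.sqrt_sq_eq_abs] at this
  have habs2 : Real.sin θ₁ * Real.sin θ₂ ≤ |b₁ * b₂| := by
    have hb1 : |b₁| = Real.sin θ₁ := by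
      rcases hb₁ with h | h <;> rw [h] <;> simp [abs_of_nonneg hs1.le]
    rw [abs_mul, hb1]
    exact mul_le_mul_of_nonneg_left habs hs1.le
  rcases abs_cases (b₁ * b₂) with ⟨he, _⟩ | ⟨he, _⟩
  · -- b₁ * b₂ ≥ sinθ₁ sinθ₂ : cos θ₃ ≤ cos (θ₁ + θ₂)
    right
    constructor
    · set s := θ₁ + θ₂ with hs
      have hcos : Real.cos θ₃ ≤ Real.cos s := by
        rw [Real.cos_add]
        rw [ha₁, ha₂] at heq
        nlinarith [habs2, he]
      set t := π - |s - π| with ht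
      have hts : Real.cos t = Real.cos s := by
        rcases le_or_gt s π with h | h
        · rw [ht, abs_of_nonpos (by linarith)]; ring_nf
        · rw [ht, abs_of_pos (by linarith)]
          have : π - (s - π) = -s + 2 * π := by ring
          rw [this, Real.cos_add_two_pi, Real.cos_neg]
      have ht1 : t ∈ Set.Icc 0 π := by
        constructor
        · have : |s - π| ≤ π := abs_le.mpr ⟨by linarith, by linarith⟩
          linarith
        · have : 0 ≤ |s - π| := abs_nonneg _
          linarith
      have h3' : θ₃ ∈ Set.Icc 0 π := ⟨h3a.le, h3b.le⟩
      have hle : t ≤ θ₃ := by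
        rw [← hts] at hcos
        exact (Real.strictAntiOn_cos.le_iff_ge h3' ht1).mp hcos
      have ha : θ₁ / π + θ₂ / π - 1 = (s - π) / π := by field_simp; rw [hs]
      have : 1 - |θ₁ / π + θ₂ / π - 1| = t / π := by
        rw [ha, abs_div, abs_of_pos hπ, ht]
        field_simp
      rw [this]
      exact (div_le_div_iff_of_pos_right hπ).mpr hle
    · exact (div_lt_one hπ).mpr h3b
  · -- b₁ * b₂ ≤ -sinθ₁ sinθ₂ : cos θ₃ ≥ cos (θ₁ - θ₂)
    left
    refine ⟨div_pos h3a hπ, ?_⟩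
    have hcos : Real.cos |θ₁ - θ₂| ≤ Real.cos θ₃ := by
      rw [Real.cos_abs, Real.cos_sub]
      rw [ha₁, ha₂] at heq
      nlinarith [habs2, he]
    have hI : |θ₁ - θ₂| ∈ Set.Icc 0 π := by
      constructor
      · exact abs_nonneg _
      · exact (abs_le.mpr ⟨by linarith, by linarith⟩)
    have h3' : θ₃ ∈ Set.Icc 0 π := ⟨h3a.le, h3b.le⟩
    have hle : θ₃ ≤ |θ₁ - θ₂| := (Real.strictAntiOn_cos.le_iff_ge hI h3').mp hcos
    have ha : θ₁ / π - θ₂ / π = (θ₁ - θ₂) / π := by field_simp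
    rw [ha, abs_div, abs_of_pos hπ]
    exact (div_le_div_iff_of_pos_right hπ).mpr hle
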